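/- arXiv:1711.00123 — 3 statements merged into one kernel-verified Lean document; each statement's English description precedes it below -/
import Mathlib

section
/- Gumbel-argmax correctness: if u_i ∼ Uniform(0,1) independently and z_i = log θ_i − log(−log u_i), then P(argmax_i z_i = k) = θ_k. -/
open MeasureTheory ProbabilityTheory

lemma gumbel_rpow_sum {x : ℝ} (hx : 0 < x) {ι : Type*} (s : Finset ι) (f : ι → ℝ) :
    x ^ (∑ i ∈ s, f i) = ∏ i ∈ s, x ^ f i := by
  classical
  induction s using Finset.induction with
  | empty => simp
  | @insert a s h ih => rw [Finset.sum_insert h, Finset.prod_insert h, Real.rpow_add hx, ih]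

lemma gumbel_z_lt_iff {ti tk ui uk : ℝ} (hti : 0 < ti) (htk : 0 < tk)
    (hui : ui ∈ Set.Ioo (0:ℝ) 1) (huk : uk ∈ Set.Ioo (0:ℝ) 1) :
    Real.log ti - Real.log (-Real.log ui) < Real.log tk - Real.log (-Real.log uk) ↔
      ui < uk ^ (ti / tk) := by
  obtain ⟨hui0, hui1⟩ := hui
  obtain ⟨huk0, huk1⟩ := huk
  have hai : 0 < -Real.log ui := by have := Real.log_neg hui0 hui1; linarith
  have hak : 0 < -Real.log uk := by have := Real.log_neg huk0 huk1; linarith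
  have h1 : Real.log ti - Real.log (-Real.log ui) = Real.log (ti / -Real.log ui) := by
    rw [Real.log_div hti.ne' hai.ne']
  have h2 : Real.log tk - Real.log (-Real.log uk) = Real.log (tk / -Real.log uk) := by
    rw [Real.log_div htk.ne' hak.ne']
  rw [h1, h2, Real.log_lt_log_iff (by positivity) (by positivity),
    div_lt_div_iff₀ hai hak]
  have h3 : ui < uk ^ (ti / tk) ↔ Real.log ui < Real.log (uk ^ (ti / tk)) :=
    (Real.log_lt_log_iff hui0 (Real.rpow_pos_of_pos huk0 _)).symm
  rw [h3, Real.log_rpow huk0,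
    show ti / tk * Real.log uk = ti * Real.log uk / tk by ring, lt_div_iff₀ htk]
  constructor <;> intro h <;> nlinarith

/-- Gumbel-argmax correctness: if `u i ∼ Uniform(0,1)` independently and
`z i = log θ i − log(−log (u i))`, then `P(argmax z = k) = θ k`. -/
theorem gumbel_argmax {Ω : Type*} [MeasurableSpace Ω]
    (P : Measure Ω) [IsProbabilityMeasure P]
    {n : ℕ} (θ : Fin n → ℝ) (hθ : ∀ i, 0 < θ i) (hsum : ∑ i, θ i = 1)
    (u : Fin n → Ω → ℝ) (hu : ∀ i, Measurable (u i))
    (huni : ∀ i, Measure.map (u i) P = volume.restrict (Set.Ioo (0 : ℝ) 1))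
    (hind : iIndepFun u P)
    (z : Fin n → Ω → ℝ)
    (hz : ∀ i ω, z i ω = Real.log (θ i) - Real.log (-Real.log (u i ω)))
    (k : Fin n) :
    P {ω | ∀ i, i ≠ k → z i ω < z k ω} = ENNReal.ofReal (θ k) := by
  classical
  obtain ⟨m, rfl⟩ : ∃ m, n = m + 1 :=
    Nat.exists_eq_succ_of_ne_zero (by rintro rfl; exact k.elim0)
  set μ : Measure ℝ := volume.restrict (Set.Ioo 0 1) with hμdef
  have hJmeas : Measurable (fun ω i => u i ω) := measurable_pi_lambda _ hu
  -- joint law is product of uniforms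
  have hmap : Measure.map (fun ω i => u i ω) P = Measure.pi (fun _ : Fin (m+1) => μ) := by
    refine (Measure.pi_eq fun s hs => ?_).symm
    rw [Measure.map_apply hJmeas (MeasurableSet.univ_pi hs)]
    have hpre : (fun ω i => u i ω) ⁻¹' Set.pi Set.univ s = ⋂ i, u i ⁻¹' s i := by
      ext ω; simp [Set.mem_pi]
    rw [hpre, hind.meas_iInter (fun i => ⟨s i, hs i, rfl⟩)]
    exact Finset.prod_congr rfl fun i _ => by
      rw [← Measure.map_apply (hu i) (hs i), huni i]
  -- a.s. all u i lie in (0,1)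
  have hGall : ∀ᵐ ω ∂P, ∀ i, u i ω ∈ Set.Ioo (0:ℝ) 1 := by
    rw [ae_all_iff]
    intro i
    have h1 : P (u i ⁻¹' Set.Ioo 0 1) = 1 := by
      rw [← Measure.map_apply (hu i) measurableSet_Ioo, huni i,
        Measure.restrict_apply measurableSet_Ioo, Set.inter_self, Real.volume_Ioo]
      norm_num
    have h0 : P ((u i ⁻¹' Set.Ioo 0 1)ᶜ) = 0 :=
      (prob_compl_eq_zero_iff ((hu i) measurableSet_Ioo)).2 h1
    rw [ae_iff]
    exact h0
  set S : Set (Fin (m+1) → ℝ) := {x | ∀ i, i ≠ k → x i < x k ^ (θ i / θ k)} with hSdef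
  have hSmeas : MeasurableSet S := by
    have : S = ⋂ i, ⋂ _ : i ≠ k, {x | x i < x k ^ (θ i / θ k)} := by
      ext x; simp [hSdef]
    rw [this]
    exact MeasurableSet.iInter fun i => MeasurableSet.iInter fun _ =>
      measurableSet_lt (measurable_pi_apply i)
        (((Real.continuous_rpow_const (div_nonneg (hθ i).le (hθ k).le)).measurable).comp
          (measurable_pi_apply k))
  have hEq : {ω | ∀ i, i ≠ k → z i ω < z k ω} =ᵐ[P] (fun ω i => u i ω) ⁻¹' S := by
    filter_upwards [hGall] with ω hω
    simp only [Set.mem_setOf_eq, Set.mem_preimage, hSdef, eq_iff_iff]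
    exact forall_congr' fun i => imp_congr_right fun _ => by
      rw [hz i ω, hz k ω]; exact gumbel_z_lt_iff (hθ i) (hθ k) (hω i) (hω k)
  rw [measure_congr hEq, ← Measure.map_apply hJmeas hSmeas, hmap]
  -- split off coordinate k
  set T : Set (ℝ × (Fin m → ℝ)) :=
    {p | ∀ j, p.2 j < p.1 ^ (θ (k.succAbove j) / θ k)} with hTdef
  have hTmeas : MeasurableSet T := by
    have : T = ⋂ j, {p : ℝ × (Fin m → ℝ) | p.2 j < p.1 ^ (θ (k.succAbove j) / θ k)} := by
      ext p; simp [hTdef]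
    rw [this]
    exact MeasurableSet.iInter fun j =>
      measurableSet_lt (measurable_snd.eval)
        (((Real.continuous_rpow_const
          (div_nonneg (hθ (k.succAbove j)).le (hθ k).le)).measurable).comp measurable_fst)
  have happ : ∀ x : Fin (m+1) → ℝ, (MeasurableEquiv.piFinSuccAbove (fun _ => ℝ) k) x
      = (x k, fun j => x (k.succAbove j)) := fun x => rfl
  have hpreT : S = (MeasurableEquiv.piFinSuccAbove (fun _ => ℝ) k) ⁻¹' T := by
    ext x
    simp only [Set.mem_preimage, happ, hTdef, hSdef, Set.mem_setOf_eq]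
    constructor
    · intro h j; exact h _ (k.succAbove_ne j)
    · intro h i hi
      obtain ⟨j, rfl⟩ := Fin.exists_succAbove_eq hi
      exact h j
  have hmp := measurePreserving_piFinSuccAbove (fun _ : Fin (m+1) => μ) k
  rw [hpreT, hmp.measure_preimage hTmeas.nullMeasurableSet, Measure.prod_apply hTmeas]
  -- inner measures
  set s : ℝ := (1 - θ k) / θ k with hsdef
  have hθk1 : θ k ≤ 1 := hsum ▸ Finset.single_le_sum (fun i _ => (hθ i).le) (Finset.mem_univ k)
  have hs0 : 0 ≤ s := div_nonneg (by linarith) (hθ k).le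
  have hsum' : ∑ j : Fin m, θ (k.succAbove j) / θ k = s := by
    rw [hsdef, ← Finset.sum_div]
    congr 1
    have := Fin.sum_univ_succAbove θ k
    rw [hsum] at this
    linarith
  have hinner : ∀ t ∈ Set.Ioo (0:ℝ) 1,
      Measure.pi (fun _ : Fin m => μ) (Prod.mk t ⁻¹' T) = ENNReal.ofReal (t ^ s) := by
    intro t ht
    have hbox : Prod.mk t ⁻¹' T =
        Set.pi Set.univ (fun j => Set.Iio (t ^ (θ (k.succAbove j) / θ k))) := by
      ext y; simp [hTdef, Set.mem_pi]
    rw [hbox, Measure.pi_pi]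
    have hterm : ∀ j : Fin m, μ (Set.Iio (t ^ (θ (k.succAbove j) / θ k)))
        = ENNReal.ofReal (t ^ (θ (k.succAbove j) / θ k)) := by
      intro j
      set c : ℝ := t ^ (θ (k.succAbove j) / θ k) with hc
      have hc0 : 0 < c := Real.rpow_pos_of_pos ht.1 _
      have hc1 : c < 1 := Real.rpow_lt_one ht.1.le ht.2 (div_pos (hθ _) (hθ k))
      have : Set.Iio c ∩ Set.Ioo (0:ℝ) 1 = Set.Ioo 0 c := by
        ext x
        simp only [Set.mem_inter_iff, Set.mem_Iio, Set.mem_Ioo]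
        constructor
        · rintro ⟨h1, h2, _⟩; exact ⟨h2, h1⟩
        · rintro ⟨h1, h2⟩; exact ⟨h2, h1, h2.trans hc1⟩
      rw [hμdef, Measure.restrict_apply measurableSet_Iio, this, Real.volume_Ioo, sub_zero]
    rw [Finset.prod_congr rfl fun j _ => hterm j]
    rw [← ENNReal.ofReal_prod_of_nonneg (fun j _ => (Real.rpow_pos_of_pos ht.1 _).le),
      ← gumbel_rpow_sum ht.1, hsum']
  rw [hμdef, setLIntegral_congr_fun measurableSet_Ioo hinner]
  -- the integral
  have hInt : IntegrableOn (fun t : ℝ => t ^ s) (Set.Ioo 0 1) volume := by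
    have h := intervalIntegral.intervalIntegrable_rpow' (a := 0) (b := 1)
      (by linarith : (-1:ℝ) < s)
    exact ((intervalIntegrable_iff_integrableOn_Ioc_of_le zero_le_one).1 h).mono_set
      Set.Ioo_subset_Ioc_self
  rw [← ofReal_integral_eq_lintegral_ofReal hInt
    ((ae_restrict_iff' measurableSet_Ioo).2 (ae_of_all _ fun t ht => Real.rpow_nonneg ht.1.le _))]
  congr 1
  rw [← MeasureTheory.integral_Ioc_eq_integral_Ioo, ← intervalIntegral.integral_of_le zero_le_one,
    integral_rpow (Or.inl (by linarith))]
  rw [Real.one_rpow, Real.zero_rpow (by linarith : s + 1 ≠ 0)]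
  have hk0 : θ k ≠ 0 := (hθ k).ne'
  have hs1 : s + 1 = 1 / θ k := by
    rw [hsdef]; field_simp; ring
  rw [hs1]
  field_simp
  norm_num
end

section
/- Conditional reparameterization for Bernoulli, case b = 0: if v ∼ Uniform(0,1), v' = v·(1−θ), and z̃ = log(θ/(1−θ)) + log(v'/(1−v')), then z̃ has the conditional distribution of z given z ≤ 0, where z = log(θ/(1−θ)) + log(u/(1−u)) with u ∼ Uniform(0,1). Concretely, for all t ≤ 0, P(z̃ ≤ t) = P(z ≤ t)/(1−θ), and P(z̃ ≤ 0) = 1. -/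
open MeasureTheory ProbabilityTheory

lemma unif_cdf_aux {Ω : Type*} [MeasurableSpace Ω] (P : Measure Ω)
    (f : Ω → ℝ) (hf : Measurable f)
    (hmap : Measure.map f P = volume.restrict (Set.Ioo (0:ℝ) 1))
    {c : ℝ} (hc0 : 0 < c) (hc1 : c ≤ 1) :
    P {ω | f ω ∈ Set.Ioo (0:ℝ) 1 ∧ f ω ≤ c} = ENNReal.ofReal c := by
  have hA : MeasurableSet (Set.Ioo (0:ℝ) 1 ∩ Set.Iic c) :=
    measurableSet_Ioo.inter measurableSet_Iic
  have hset : {ω | f ω ∈ Set.Ioo (0:ℝ) 1 ∧ f ω ≤ c}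
      = f ⁻¹' (Set.Ioo (0:ℝ) 1 ∩ Set.Iic c) := rfl
  rw [hset, ← Measure.map_apply hf hA, hmap, Measure.restrict_apply hA]
  apply le_antisymm
  · calc volume ((Set.Ioo (0:ℝ) 1 ∩ Set.Iic c) ∩ Set.Ioo 0 1)
        ≤ volume (Set.Ioc (0:ℝ) c) := by
          apply measure_mono
          rintro x ⟨⟨⟨hx0, _⟩, hxc⟩, _⟩
          exact ⟨hx0, hxc⟩
      _ = ENNReal.ofReal c := by rw [Real.volume_Ioc]; simp
  · calc ENNReal.ofReal c = volume (Set.Ioo (0:ℝ) c) := by rw [Real.volume_Ioo]; simp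
      _ ≤ _ := by
        apply measure_mono
        rintro x ⟨hx0, hxc⟩
        exact ⟨⟨⟨hx0, lt_of_lt_of_le hxc hc1⟩, le_of_lt hxc⟩, hx0, lt_of_lt_of_le hxc hc1⟩

lemma log_ineq_aux {θ : ℝ} (hθ : θ ∈ Set.Ioo (0:ℝ) 1) {x t : ℝ} (hx : x ∈ Set.Ioo (0:ℝ) 1) :
    Real.log (θ/(1-θ)) + Real.log (x/(1-x)) ≤ t ↔
      x ≤ Real.exp t * (1-θ) / (θ + Real.exp t * (1-θ)) := by
  obtain ⟨hθ0, hθ1⟩ := hθ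
  obtain ⟨hx0, hx1⟩ := hx
  have h1θ : (0:ℝ) < 1 - θ := by linarith
  have h1x : (0:ℝ) < 1 - x := by linarith
  have hE : (0:ℝ) < Real.exp t := Real.exp_pos t
  have hA : (0:ℝ) < θ/(1-θ) := by positivity
  have hB : (0:ℝ) < x/(1-x) := by positivity
  have hD : (0:ℝ) < θ + Real.exp t * (1-θ) := by positivity
  rw [← Real.log_mul (ne_of_gt hA) (ne_of_gt hB),
    Real.log_le_iff_le_exp (by positivity)]
  rw [div_mul_div_comm, div_le_iff₀ (by positivity), le_div_iff₀ hD]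
  constructor
  · intro h; nlinarith
  · intro h; nlinarith

/-- Conditional reparameterization for a Bernoulli, case `b = 0`: with `v ∼ Uniform(0,1)`,
`v' = v(1−θ)` and `z̃ = log(θ/(1−θ)) + log(v'/(1−v'))`, the variable `z̃` has the
conditional law of `z` given `z ≤ 0`, where `z = log(θ/(1−θ)) + log(u/(1−u))`,
`u ∼ Uniform(0,1)`: for all `t ≤ 0`, `P(z̃ ≤ t) = P(z ≤ t)/(1−θ)`, and `P(z̃ ≤ 0) = 1`. -/
theorem bernoulli_conditional_reparam_zero {Ω : Type*} [MeasurableSpace Ω]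
    (P : Measure Ω) [IsProbabilityMeasure P]
    (θ : ℝ) (hθ : θ ∈ Set.Ioo (0 : ℝ) 1)
    (u v : Ω → ℝ) (hu : Measurable u) (hv : Measurable v)
    (huni : Measure.map u P = volume.restrict (Set.Ioo (0 : ℝ) 1))
    (hvni : Measure.map v P = volume.restrict (Set.Ioo (0 : ℝ) 1))
    (hind : IndepFun u v P)
    (z ztilde : Ω → ℝ)
    (hz : ∀ ω, z ω = Real.log (θ / (1 - θ)) + Real.log (u ω / (1 - u ω)))
    (hzt : ∀ ω, ztilde ω = Real.log (θ / (1 - θ))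
        + Real.log ((v ω * (1 - θ)) / (1 - v ω * (1 - θ)))) :
    (∀ t : ℝ, t ≤ 0 →
        P {ω | ztilde ω ≤ t} = P {ω | z ω ≤ t} / ENNReal.ofReal (1 - θ)) ∧
    P {ω | ztilde ω ≤ 0} = 1 := by
  obtain ⟨hθ0, hθ1⟩ := hθ
  have h1θ : (0:ℝ) < 1 - θ := by linarith
  -- a.e. membership of u, v in Ioo 0 1
  have hIoo : MeasurableSet (Set.Ioo (0:ℝ) 1) := measurableSet_Ioo
  have hnull : ∀ (f : Ω → ℝ), Measurable f →
      Measure.map f P = volume.restrict (Set.Ioo (0:ℝ) 1) →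
      P (f ⁻¹' Set.Ioo (0:ℝ) 1)ᶜ = 0 := by
    intro f hf hmap
    have h1 : P (f ⁻¹' Set.Ioo (0:ℝ) 1) = 1 := by
      rw [← Measure.map_apply hf hIoo, hmap, Measure.restrict_apply hIoo]
      simp [Real.volume_Ioo]
    rw [measure_compl (hf hIoo) (measure_ne_top P _), h1, measure_univ, tsub_self]
  -- CDF of z
  have hzcdf : ∀ t : ℝ, P {ω | z ω ≤ t}
      = ENNReal.ofReal (Real.exp t * (1-θ) / (θ + Real.exp t * (1-θ))) := by
    intro t
    have hE : (0:ℝ) < Real.exp t := Real.exp_pos t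
    have hD : (0:ℝ) < θ + Real.exp t * (1-θ) := by positivity
    have hc0 : (0:ℝ) < Real.exp t * (1-θ) / (θ + Real.exp t * (1-θ)) := by positivity
    have hc1 : Real.exp t * (1-θ) / (θ + Real.exp t * (1-θ)) ≤ 1 := by
      rw [div_le_one hD]; nlinarith
    have := measure_inter_conull (s := {ω | z ω ≤ t}) (hnull u hu huni)
    rw [← this]
    have hseteq : {ω | z ω ≤ t} ∩ (u ⁻¹' Set.Ioo (0:ℝ) 1)
        = {ω | u ω ∈ Set.Ioo (0:ℝ) 1 ∧ u ω ≤ Real.exp t * (1-θ) / (θ + Real.exp t * (1-θ))} := by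
      ext ω
      simp only [Set.mem_inter_iff, Set.mem_setOf_eq, Set.mem_preimage]
      constructor
      · rintro ⟨hle, hmem⟩
        exact ⟨hmem, (log_ineq_aux ⟨hθ0, hθ1⟩ hmem).mp (by rw [← hz ω]; exact hle)⟩
      · rintro ⟨hmem, hle⟩
        exact ⟨by rw [hz ω]; exact (log_ineq_aux ⟨hθ0, hθ1⟩ hmem).mpr hle, hmem⟩
    rw [hseteq, unif_cdf_aux P u hu huni hc0 hc1]
  -- CDF of ztilde for t ≤ 0
  have hztcdf : ∀ t : ℝ, t ≤ 0 → P {ω | ztilde ω ≤ t}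
      = ENNReal.ofReal (Real.exp t / (θ + Real.exp t * (1-θ))) := by
    intro t ht
    have hE : (0:ℝ) < Real.exp t := Real.exp_pos t
    have hE1 : Real.exp t ≤ 1 := Real.exp_le_one_iff.mpr ht
    have hD : (0:ℝ) < θ + Real.exp t * (1-θ) := by positivity
    have hc0 : (0:ℝ) < Real.exp t / (θ + Real.exp t * (1-θ)) := by positivity
    have hc1 : Real.exp t / (θ + Real.exp t * (1-θ)) ≤ 1 := by
      rw [div_le_one hD]; nlinarith
    have := measure_inter_conull (s := {ω | ztilde ω ≤ t}) (hnull v hv hvni)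
    rw [← this]
    have hseteq : {ω | ztilde ω ≤ t} ∩ (v ⁻¹' Set.Ioo (0:ℝ) 1)
        = {ω | v ω ∈ Set.Ioo (0:ℝ) 1 ∧ v ω ≤ Real.exp t / (θ + Real.exp t * (1-θ))} := by
      ext ω
      simp only [Set.mem_inter_iff, Set.mem_setOf_eq, Set.mem_preimage]
      have key : ∀ hmem : v ω ∈ Set.Ioo (0:ℝ) 1,
          (ztilde ω ≤ t ↔ v ω ≤ Real.exp t / (θ + Real.exp t * (1-θ))) := by
        intro hmem
        obtain ⟨hv0, hv1⟩ := hmem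
        have hwmem : v ω * (1 - θ) ∈ Set.Ioo (0:ℝ) 1 := by
          constructor
          · positivity
          · nlinarith
        rw [hzt ω, log_ineq_aux ⟨hθ0, hθ1⟩ hwmem]
        have heq : Real.exp t * (1-θ) / (θ + Real.exp t * (1-θ))
            = (Real.exp t / (θ + Real.exp t * (1-θ))) * (1-θ) := by ring
        rw [heq, mul_le_mul_iff_of_pos_right h1θ]
      constructor
      · rintro ⟨hle, hmem⟩
        exact ⟨hmem, (key hmem).mp hle⟩
      · rintro ⟨hmem, hle⟩
        exact ⟨(key hmem).mpr hle, hmem⟩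
    rw [hseteq, unif_cdf_aux P v hv hvni hc0 hc1]
  constructor
  · intro t ht
    rw [hzcdf t, hztcdf t ht, ← ENNReal.ofReal_div_of_pos h1θ]
    congr 1
    field_simp
  · have := hztcdf 0 le_rfl
    rw [this]
    norm_num
end

section
/- Conditional reparameterization for Bernoulli, case b = 1: if v ∼ Uniform(0,1), v' = v·θ + (1−θ), and z̃ = log(θ/(1−θ)) + log(v'/(1−v')), then z̃ has the conditional distribution of z given z > 0, where z = log(θ/(1−θ)) + log(u/(1−u)) with u ∼ Uniform(0,1). Concretely, for all t > 0, P(z̃ > t) = P(z > t)/θ, and P(z̃ > 0) = 1. -/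
open MeasureTheory ProbabilityTheory

/-- Tail probability of a uniform random variable. -/
lemma uniform_tail {Ω : Type*} [MeasurableSpace Ω] (P : Measure Ω)
    (w : Ω → ℝ) (hw : Measurable w)
    (hwni : Measure.map w P = volume.restrict (Set.Ioo (0 : ℝ) 1))
    (a : ℝ) (ha : 0 ≤ a) :
    P {ω | a < w ω} = ENNReal.ofReal (1 - a) := by
  have h1 : P {ω | a < w ω} = Measure.map w P (Set.Ioi a) := by
    rw [Measure.map_apply hw measurableSet_Ioi]
    rfl
  rw [h1, hwni, Measure.restrict_apply measurableSet_Ioi]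
  have h2 : Set.Ioi a ∩ Set.Ioo 0 1 = Set.Ioo a 1 := by
    ext x
    simp only [Set.mem_inter_iff, Set.mem_Ioi, Set.mem_Ioo]
    constructor
    · rintro ⟨h, _, h2⟩; exact ⟨h, h2⟩
    · rintro ⟨h, h2⟩; exact ⟨h, lt_of_le_of_lt ha h, h2⟩
  rw [h2, Real.volume_Ioo]

/-- A uniform random variable is a.s. in (0,1). -/
lemma uniform_ae_mem {Ω : Type*} [MeasurableSpace Ω] (P : Measure Ω)
    [IsProbabilityMeasure P]
    (w : Ω → ℝ) (hw : Measurable w)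
    (hwni : Measure.map w P = volume.restrict (Set.Ioo (0 : ℝ) 1)) :
    ∀ᵐ ω ∂P, w ω ∈ Set.Ioo (0 : ℝ) 1 := by
  have h1 : P (w ⁻¹' Set.Ioo 0 1) = 1 := by
    rw [← Measure.map_apply hw measurableSet_Ioo, hwni,
      Measure.restrict_apply measurableSet_Ioo, Set.inter_self, Real.volume_Ioo]
    norm_num
  have h2 : P (w ⁻¹' Set.Ioo 0 1)ᶜ = 0 := by
    rw [measure_compl (hw measurableSet_Ioo) (measure_ne_top _ _), h1,
      measure_univ, tsub_self]
  rw [MeasureTheory.ae_iff]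
  convert h2 using 2
  ext x; simp

/-- Key pointwise equivalence. -/
lemma logit_iff (θ t x : ℝ) (hθ : θ ∈ Set.Ioo (0 : ℝ) 1) (hx : x ∈ Set.Ioo (0 : ℝ) 1) :
    (t < Real.log (θ / (1 - θ)) + Real.log (x / (1 - x))) ↔
      (Real.exp t * ((1 - θ) / θ)) / (1 + Real.exp t * ((1 - θ) / θ)) < x := by
  obtain ⟨hθ0, hθ1⟩ := hθ
  obtain ⟨hx0, hx1⟩ := hx
  have h1θ : 0 < 1 - θ := by linarith
  have h1x : 0 < 1 - x := by linarith
  set E := Real.exp t * ((1 - θ) / θ) with hE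
  have hEpos : 0 < E := by positivity
  have h1E : 0 < 1 + E := by linarith
  have hA : (0:ℝ) < θ / (1 - θ) * (x / (1 - x)) := by positivity
  rw [← Real.log_mul (by positivity) (by positivity),
    Real.lt_log_iff_exp_lt hA,
    div_mul_div_comm, lt_div_iff₀ (by positivity), div_lt_iff₀ h1E]
  have hEθ : E * θ = Real.exp t * (1 - θ) := by
    rw [hE, mul_assoc, div_mul_cancel₀ _ hθ0.ne']
  constructor
  · intro h
    nlinarith [mul_lt_mul_of_pos_left h hθ0]
  · intro h
    nlinarith [mul_lt_mul_of_pos_right h hθ0]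

/-- Conditional reparameterization for a Bernoulli, case `b = 1`: with `v ∼ Uniform(0,1)`,
`v' = vθ + (1−θ)` and `z̃ = log(θ/(1−θ)) + log(v'/(1−v'))`, the variable `z̃` has the
conditional law of `z` given `z > 0`, where `z = log(θ/(1−θ)) + log(u/(1−u))`,
`u ∼ Uniform(0,1)`: for all `t > 0`, `P(z̃ > t) = P(z > t)/θ`, and `P(z̃ > 0) = 1`. -/
theorem bernoulli_conditional_reparam_one {Ω : Type*} [MeasurableSpace Ω]
    (P : Measure Ω) [IsProbabilityMeasure P]
    (θ : ℝ) (hθ : θ ∈ Set.Ioo (0 : ℝ) 1)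
    (u v : Ω → ℝ) (hu : Measurable u) (hv : Measurable v)
    (huni : Measure.map u P = volume.restrict (Set.Ioo (0 : ℝ) 1))
    (hvni : Measure.map v P = volume.restrict (Set.Ioo (0 : ℝ) 1))
    (hind : IndepFun u v P)
    (z ztilde : Ω → ℝ)
    (hz : ∀ ω, z ω = Real.log (θ / (1 - θ)) + Real.log (u ω / (1 - u ω)))
    (hzt : ∀ ω, ztilde ω = Real.log (θ / (1 - θ))
        + Real.log ((v ω * θ + (1 - θ)) / (1 - (v ω * θ + (1 - θ))))) :
    (∀ t : ℝ, 0 < t →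
        P {ω | t < ztilde ω} = P {ω | t < z ω} / ENNReal.ofReal θ) ∧
    P {ω | 0 < ztilde ω} = 1 := by
  obtain ⟨hθ0, hθ1⟩ := hθ
  have h1θ : 0 < 1 - θ := by linarith
  have hvae := uniform_ae_mem P v hv hvni
  have huae := uniform_ae_mem P u hu huni
  -- general computation for ztilde, for t ≥ 0
  have hzt_tail : ∀ t : ℝ, 0 ≤ t →
      P {ω | t < ztilde ω} =
        ENNReal.ofReal (1 - ((Real.exp t * ((1 - θ) / θ)) / (1 + Real.exp t * ((1 - θ) / θ))
          - (1 - θ)) / θ) := by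
    intro t ht
    set E := Real.exp t * ((1 - θ) / θ) with hE
    have hEpos : 0 < E := by positivity
    have h1E : 0 < 1 + E := by linarith
    set s := E / (1 + E) with hs
    set r := (s - (1 - θ)) / θ with hr
    have hsθ : 1 - θ ≤ s := by
      rw [hs, le_div_iff₀ h1E]
      have h1 : (1:ℝ) ≤ Real.exp t := Real.one_le_exp ht
      have hEθ : E * θ = Real.exp t * (1 - θ) := by rw [hE, mul_assoc, div_mul_cancel₀ _ hθ0.ne']
      nlinarith [hEθ, h1, h1θ]
    have hs1 : s < 1 := by
      rw [hs, div_lt_one h1E]; linarith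
    have hr0 : 0 ≤ r := by
      rw [hr]; apply div_nonneg _ hθ0.le; linarith
    have hsets : {ω | t < ztilde ω} =ᵐ[P] {ω | r < v ω} := by
      refine Filter.eventuallyEq_set.mpr (hvae.mono fun ω hω => ?_)
      obtain ⟨hv0, hv1⟩ := hω
      have hx : v ω * θ + (1 - θ) ∈ Set.Ioo (0:ℝ) 1 := by
        constructor <;> nlinarith
      simp only [Set.mem_setOf_eq, hzt ω]
      rw [logit_iff θ t _ ⟨hθ0, hθ1⟩ hx]
      rw [hr, div_lt_iff₀ hθ0]
      constructor <;> intro h <;> [nlinarith; nlinarith]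
    rw [measure_congr hsets, uniform_tail P v hv hvni r hr0]
  constructor
  · intro t ht
    set E := Real.exp t * ((1 - θ) / θ) with hE
    have hEpos : 0 < E := by positivity
    have h1E : 0 < 1 + E := by linarith
    set s := E / (1 + E) with hs
    have hs0 : 0 ≤ s := by positivity
    -- z tail
    have hz_tail : P {ω | t < z ω} = ENNReal.ofReal (1 - E / (1 + E)) := by
      have hsets : {ω | t < z ω} =ᵐ[P] {ω | s < u ω} := by
        refine Filter.eventuallyEq_set.mpr (huae.mono fun ω hω => ?_)
        simp only [Set.mem_setOf_eq, hz ω]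
        exact logit_iff θ t _ ⟨hθ0, hθ1⟩ hω
      rw [measure_congr hsets, uniform_tail P u hu huni s hs0]
    have harith : ∀ x : ℝ, 1 - (x - (1 - θ)) / θ = (1 - x) / θ := by
      intro x
      field_simp
      ring
    rw [hzt_tail t ht.le, hz_tail, harith, ENNReal.ofReal_div_of_pos hθ0, hE]
  · have h0 : P {ω | 0 < ztilde ω} =
        ENNReal.ofReal (1 - ((Real.exp 0 * ((1 - θ) / θ)) / (1 + Real.exp 0 * ((1 - θ) / θ))
          - (1 - θ)) / θ) := hzt_tail 0 le_rfl
    rw [h0, Real.exp_zero, one_mul]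
    have : ((1 - θ) / θ) / (1 + (1 - θ) / θ) = 1 - θ := by
      rw [div_eq_iff (by positivity)]
      field_simp
      ring
    rw [this]
    norm_num
end
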